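/- Let N ≥ 1 and work in ℝ^N (EuclideanSpace ℝ (Fin N)). Let ε, κ ∈ ℝ and define the bulk energy F(u) = (1/N)·∑_j ((ε/2)·u_j² − (κ/3)·u_j³ + (1/4)·u_j⁴), and the quartic kernel h(u) = (a/4)‖u‖⁴ + (b/2)‖u‖² + 1 with a, b > 0. Then F is relatively smooth with respect to h: there exists R > 0 such that for all u, v ∈ ℝ^N, R·((a‖u‖² + b)·‖v‖² + 2a·⟪u, v⟫²) ≥ (1/N)·∑_j (ε − 2κ·u_j + 3·u_j²)·v_j², i.e. R·∇²h(u) − ∇²F(u) is positive semidefinite for every u. -/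
import Mathlib


open RealInnerProductSpace

/-- The discretized PFC bulk energy `F(u) = (1/N)∑_j((ε/2)u_j² − (κ/3)u_j³ + (1/4)u_j⁴)` is
relatively smooth with respect to the quartic kernel `h(u) = (a/4)‖u‖⁴ + (b/2)‖u‖² + 1`:
there is `R > 0` with `R·∇²h(u) − ∇²F(u)` positive semidefinite for all `u`. -/
theorem pfc_bulk_relative_smooth_quartic
    (N : ℕ) (hN : 0 < N)
    (ε κ a b : ℝ) (ha : 0 < a) (hb : 0 < b) :
    ∃ R : ℝ, 0 < R ∧
      ∀ u v : EuclideanSpace ℝ (Fin N),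
        (1 / (N : ℝ)) * ∑ j, (ε - 2 * κ * u j + 3 * u j ^ 2) * v j ^ 2 ≤
          R * ((a * ‖u‖ ^ 2 + b) * ‖v‖ ^ 2 + 2 * a * ⟪u, v⟫ ^ 2) := by
  have hNpos : (0 : ℝ) < N := by exact_mod_cast hN
  set C : ℝ := |ε| + κ ^ 2 with hC
  have hC0 : 0 ≤ C := by positivity
  refine ⟨(C / b + 4 / a + 1) / N, by positivity, ?_⟩
  intro u v
  have hnorm : ∀ w : EuclideanSpace ℝ (Fin N), ‖w‖ ^ 2 = ∑ j, w j ^ 2 := by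
    intro w
    rw [EuclideanSpace.norm_eq, Real.sq_sqrt (by positivity)]
    simp [sq_abs]
  have huj : ∀ j, u j ^ 2 ≤ ‖u‖ ^ 2 := by
    intro j
    rw [hnorm]
    exact Finset.single_le_sum (f := fun i => u i ^ 2) (fun i _ => sq_nonneg _)
      (Finset.mem_univ j)
  have hsum : ∑ j, (ε - 2 * κ * u j + 3 * u j ^ 2) * v j ^ 2 ≤
      (C + 4 * ‖u‖ ^ 2) * ∑ j, v j ^ 2 := by
    rw [Finset.mul_sum]
    refine Finset.sum_le_sum fun j _ => ?_
    have h1 : ε - 2 * κ * u j + 3 * u j ^ 2 ≤ C + 4 * ‖u‖ ^ 2 := by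
      have := huj j
      have := abs_le.mp (le_refl |ε|)
      nlinarith [sq_nonneg (κ + u j), le_abs_self ε]
    nlinarith [sq_nonneg (v j)]
  have hvnorm : ∑ j, v j ^ 2 = ‖v‖ ^ 2 := (hnorm v).symm
  rw [hvnorm] at hsum
  have hinner : (0 : ℝ) ≤ ⟪u, v⟫ ^ 2 := sq_nonneg _
  have hu0 : (0 : ℝ) ≤ ‖u‖ ^ 2 := sq_nonneg _
  have hv0 : (0 : ℝ) ≤ ‖v‖ ^ 2 := sq_nonneg _
  have key : (1 / (N : ℝ)) * ((C + 4 * ‖u‖ ^ 2) * ‖v‖ ^ 2) ≤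
      (C / b + 4 / a + 1) / N * ((a * ‖u‖ ^ 2 + b) * ‖v‖ ^ 2 + 2 * a * ⟪u, v⟫ ^ 2) := by
    have h1 : (C + 4 * ‖u‖ ^ 2) * ‖v‖ ^ 2 ≤
        (C / b + 4 / a + 1) * ((a * ‖u‖ ^ 2 + b) * ‖v‖ ^ 2 + 2 * a * ⟪u, v⟫ ^ 2) := by
      have hCb : (0:ℝ) ≤ C / b := by positivity
      have h4a : (0:ℝ) ≤ 4 / a := by positivity
      have eb2 : C / b * b * ‖v‖ ^ 2 = C * ‖v‖ ^ 2 := by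
        rw [div_mul_cancel₀ C hb.ne']
      have ea2 : 4 / a * a * (‖u‖ ^ 2 * ‖v‖ ^ 2) = 4 * (‖u‖ ^ 2 * ‖v‖ ^ 2) := by
        rw [div_mul_cancel₀ (4:ℝ) ha.ne']
      nlinarith [mul_nonneg hCb (mul_nonneg (mul_nonneg ha.le hu0) hv0),
        mul_nonneg hCb (mul_nonneg ha.le hinner),
        mul_nonneg h4a (mul_nonneg hb.le hv0),
        mul_nonneg h4a (mul_nonneg ha.le hinner),
        mul_nonneg (mul_nonneg ha.le hu0) hv0,
        mul_nonneg hb.le hv0,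
        mul_nonneg ha.le hinner]
    rw [one_div, inv_mul_eq_div, div_mul_eq_mul_div]
    exact (div_le_div_iff_of_pos_right hNpos).mpr h1
  calc (1 / (N : ℝ)) * ∑ j, (ε - 2 * κ * u j + 3 * u j ^ 2) * v j ^ 2
      ≤ (1 / (N : ℝ)) * ((C + 4 * ‖u‖ ^ 2) * ‖v‖ ^ 2) := by
        apply mul_le_mul_of_nonneg_left hsum (by positivity)
    _ ≤ _ := key
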